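/- arXiv:1412.3057 — 2 statements merged into one kernel-verified Lean document; each statement's English description precedes it below -/
import Mathlib

section
/- The forward Euler map for the discrete obstacle operator is nonexpansive in the maximum norm under the same CFL condition: with F_i[u] = min(\bar{w}_i u_i − Σ_j w_j u_j, u_i − g_i) and 0 < dt ≤ 1/(1 + \bar{w}_i), the map (E u)_i = u_i − dt F_i[u] satisfies ‖E u − E v‖_∞ ≤ ‖u − v‖_∞. -/
/-- The forward Euler map for the discrete obstacle operator
`Fᵢ[u] = min(w̄ᵢ uᵢ − Σ_j w_j u_j, uᵢ − gᵢ)` is nonexpansive in the maximum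
norm under the CFL condition `0 < dt ≤ 1/(1 + w̄ᵢ)`. -/
theorem stmt11 {ι : Type*} [Fintype ι]
    (N : ι → Finset ι) (w : ι → ι → ℝ) (W : ι → ℝ) (g : ι → ℝ)
    (hw : ∀ i j, 0 ≤ w i j) (hW : ∀ i, W i = ∑ j ∈ N i, w i j)
    (dt : ℝ) (hdt : 0 < dt) (hCFL : ∀ i, dt ≤ 1 / (1 + W i))
    (u v : ι → ℝ) :
    ‖(fun i => u i -
        dt * min (W i * u i - ∑ j ∈ N i, w i j * u j) (u i - g i)) -
      (fun i => v i -
        dt * min (W i * v i - ∑ j ∈ N i, w i j * v j) (v i - g i))‖ ≤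
      ‖u - v‖ := by
  have hM : ∀ j, |u j - v j| ≤ ‖u - v‖ := fun j => by
    simpa [Real.norm_eq_abs] using norm_le_pi_norm (u - v) j
  rw [pi_norm_le_iff_of_nonneg (norm_nonneg _)]
  intro i
  have hWnn : 0 ≤ W i := by
    rw [hW]; exact Finset.sum_nonneg fun j _ => hw i j
  have hpos : 0 < 1 + W i := by linarith
  have hdt1 : dt * (1 + W i) ≤ 1 := by
    have h := hCFL i
    rw [le_div_iff₀ hpos] at h; exact h
  have hdtW : dt * W i ≤ 1 - dt := by nlinarith
  have hdtle : dt ≤ 1 := by nlinarith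
  simp only [Pi.sub_apply, Real.norm_eq_abs]
  set M := ‖u - v‖ with hMdef
  have hMnn : 0 ≤ M := norm_nonneg _
  have key : ∀ x : ι → ℝ,
      x i - dt * min (W i * x i - ∑ j ∈ N i, w i j * x j) (x i - g i)
      = max (x i - dt * (W i * x i - ∑ j ∈ N i, w i j * x j))
            (x i - dt * (x i - g i)) := by
    intro x
    rcases le_total (W i * x i - ∑ j ∈ N i, w i j * x j) (x i - g i) with h | h
    · rw [min_eq_left h, max_eq_left (by nlinarith)]
    · rw [min_eq_right h, max_eq_right (by nlinarith)]
  rw [key u, key v]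
  refine le_trans (abs_max_sub_max_le_max _ _ _ _) (max_le ?_ ?_)
  · have hsum : (∑ j ∈ N i, w i j * u j) - (∑ j ∈ N i, w i j * v j)
        = ∑ j ∈ N i, w i j * (u j - v j) := by
      rw [← Finset.sum_sub_distrib]; exact Finset.sum_congr rfl fun j _ => by ring
    have heq : (u i - dt * (W i * u i - ∑ j ∈ N i, w i j * u j))
        - (v i - dt * (W i * v i - ∑ j ∈ N i, w i j * v j))
        = (1 - dt * W i) * (u i - v i) + dt * ∑ j ∈ N i, w i j * (u j - v j) := by
      rw [← hsum]; ring
    rw [heq]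
    have hS : |∑ j ∈ N i, w i j * (u j - v j)| ≤ W i * M := by
      calc |∑ j ∈ N i, w i j * (u j - v j)| ≤ ∑ j ∈ N i, |w i j * (u j - v j)| :=
            Finset.abs_sum_le_sum_abs _ _
        _ ≤ ∑ j ∈ N i, w i j * M := Finset.sum_le_sum fun j _ => by
            rw [abs_mul, abs_of_nonneg (hw i j)]
            exact mul_le_mul_of_nonneg_left (hM j) (hw i j)
        _ = W i * M := by rw [← Finset.sum_mul, ← hW]
    have h1 : |(1 - dt * W i) * (u i - v i)| ≤ (1 - dt * W i) * M := by
      rw [abs_mul, abs_of_nonneg (by nlinarith : (0:ℝ) ≤ 1 - dt * W i)]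
      exact mul_le_mul_of_nonneg_left (hM i) (by nlinarith)
    have h2 : |dt * ∑ j ∈ N i, w i j * (u j - v j)| ≤ dt * (W i * M) := by
      rw [abs_mul, abs_of_nonneg hdt.le]
      exact mul_le_mul_of_nonneg_left hS hdt.le
    calc |(1 - dt * W i) * (u i - v i) + dt * ∑ j ∈ N i, w i j * (u j - v j)|
        ≤ |(1 - dt * W i) * (u i - v i)| + |dt * ∑ j ∈ N i, w i j * (u j - v j)| :=
          abs_add_le _ _
      _ ≤ (1 - dt * W i) * M + dt * (W i * M) := add_le_add h1 h2
      _ = M := by ring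
  · have heq : (u i - dt * (u i - g i)) - (v i - dt * (v i - g i))
        = (1 - dt) * (u i - v i) := by ring
    rw [heq, abs_mul, abs_of_nonneg (by linarith : (0:ℝ) ≤ 1 - dt)]
    nlinarith [hM i, abs_nonneg (u i - v i)]
end

section
/- Consistency of the dangling-node I-stencil: for u ∈ C⁴ near (x,y), the quantity (1/Δx²)(2u − (u(x+Δx,y+Δy)+u(x+Δx,y−Δy)+u(x−Δx,y+Δy)+u(x−Δx,y−Δy))/2) + (1/Δy² − 1/Δx²)(2u − u(x,y+Δy) − u(x,y−Δy)) equals −(∂²u/∂x² + ∂²u/∂y²)(x,y) plus an error of order O(Δx² + Δy⁴/Δx²) as Δx, Δy → 0 with Δy ≤ Δx. -/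
open Set

lemma line_iteratedDeriv (u : ℝ × ℝ → ℝ) (hu : ContDiff ℝ 4 u) (q v : ℝ × ℝ)
    {k : ℕ} (hk : k ≤ 4) :
    iteratedDeriv k (fun s : ℝ => u (q + s • v)) =
      fun t => iteratedFDeriv ℝ k u (q + t • v) (fun _ => v) := by
  induction k with
  | zero => funext t; simp [iteratedFDeriv_zero_apply]
  | succ k ih =>
    funext t
    have hk' : k ≤ 4 := Nat.le_of_succ_le hk
    rw [iteratedDeriv_succ, ih hk']
    have hdiff : DifferentiableAt ℝ (iteratedFDeriv ℝ k u) (q + t • v) :=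
      (hu.differentiable_iteratedFDeriv (by exact_mod_cast hk)) _
    have hφ : HasDerivAt (fun s : ℝ => q + s • v) v t := by
      simpa using ((hasDerivAt_id t).smul_const v).const_add q
    have h1 : HasDerivAt (fun s : ℝ => iteratedFDeriv ℝ k u (q + s • v))
        (fderiv ℝ (iteratedFDeriv ℝ k u) (q + t • v) v) t :=
      hdiff.hasFDerivAt.comp_hasDerivAt t hφ
    have h2 : HasDerivAt (fun s : ℝ => iteratedFDeriv ℝ k u (q + s • v) (fun _ => v))
        ((fderiv ℝ (iteratedFDeriv ℝ k u) (q + t • v) v) (fun _ => v)) t :=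
      ((ContinuousMultilinearMap.apply ℝ (fun _ : Fin k => ℝ × ℝ) ℝ
        (fun _ => v)).hasFDerivAt.comp_hasDerivAt t h1)
    rw [h2.deriv]
    rw [iteratedFDeriv_succ_apply_left]
    rfl

lemma itw_eq (g : ℝ → ℝ) (hg : ContDiff ℝ 4 g) {k : ℕ} (hk : (k : ℕ) ≤ 4) {t : ℝ}
    (ht : t ∈ Icc (0:ℝ) 1) :
    iteratedDerivWithin k g (Icc (0:ℝ) 1) t = iteratedDeriv k g t := by
  have h : HasFTaylorSeriesUpTo ((4:ℕ∞) : WithTop ℕ∞) g (ftaylorSeries ℝ g) :=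
    contDiff_iff_ftaylorSeries.mp (by exact_mod_cast hg)
  have h2 := (h.hasFTaylorSeriesUpToOn (Icc (0:ℝ) 1)).eq_iteratedFDerivWithin_of_uniqueDiffOn
    (by exact_mod_cast hk) (uniqueDiffOn_Icc one_pos) ht
  rw [iteratedDerivWithin_eq_iteratedFDerivWithin, ← h2]
  rw [iteratedDeriv_eq_iteratedFDeriv]
  rfl

lemma taylor4 (g : ℝ → ℝ) (hg : ContDiff ℝ 4 g) (K : ℝ)
    (hK : ∀ t, |iteratedDeriv 4 g t| ≤ K) :
    |g 1 - (g 0 + iteratedDeriv 1 g 0 + iteratedDeriv 2 g 0 / 2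
      + iteratedDeriv 3 g 0 / 6)| ≤ K / 6 := by
  have hb := taylor_mean_remainder_bound (f := g) (a := 0) (b := 1) (C := K) (x := 1)
    (n := 3) zero_le_one
    (by exact (hg.of_le (by norm_num)).contDiffOn)
    (by norm_num)
    (fun y hy => by
      rw [itw_eq g hg (by norm_num) hy]
      exact hK y)
  rw [taylor_within_apply] at hb
  have e0 : iteratedDerivWithin 0 g (Icc (0:ℝ) 1) 0 = g 0 := by
    rw [itw_eq g hg (by norm_num) (by norm_num)]; simp
  have e1 : iteratedDerivWithin 1 g (Icc (0:ℝ) 1) 0 = iteratedDeriv 1 g 0 :=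
    itw_eq g hg (by norm_num) (by norm_num)
  have e2 : iteratedDerivWithin 2 g (Icc (0:ℝ) 1) 0 = iteratedDeriv 2 g 0 :=
    itw_eq g hg (by norm_num) (by norm_num)
  have e3 : iteratedDerivWithin 3 g (Icc (0:ℝ) 1) 0 = iteratedDeriv 3 g 0 :=
    itw_eq g hg (by norm_num) (by norm_num)
  simp only [Finset.sum_range_succ, Finset.sum_range_zero, e0, e1, e2, e3] at hb
  norm_num at hb
  rw [iteratedDeriv_one]
  have hXY : g 1 - (g 0 + deriv g 0 + iteratedDeriv 2 g 0 / 2 + iteratedDeriv 3 g 0 / 6)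
      = g 1 - (g 0 + deriv g 0 + 1/2 * iteratedDeriv 2 g 0
        + ((Nat.factorial 3 : ℕ) : ℝ)⁻¹ * iteratedDeriv 3 g 0) := by
    norm_num [Nat.factorial]; ring
  rw [hXY]
  have h6 : K / 6 = K / ((Nat.factorial 3 : ℕ) : ℝ) := by norm_num [Nat.factorial]
  rw [h6]
  convert hb using 6 <;> norm_num [Nat.factorial]

lemma secdiff (u : ℝ × ℝ → ℝ) (hu : ContDiff ℝ 4 u) (M : ℝ)
    (hM : ∀ p : ℝ × ℝ, ‖iteratedFDeriv ℝ 4 u p‖ ≤ M) (q v : ℝ × ℝ) :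
    |u (q + v) + u (q - v) - 2 * u q - iteratedFDeriv ℝ 2 u q (fun _ => v)|
      ≤ M * ‖v‖ ^ 4 / 3 := by
  set g : ℝ → ℝ := fun s => u (q + s • v) with hgdef
  have hline : ∀ t : ℝ, HasDerivAt (fun s : ℝ => q + s • v) v t := fun t => by
    simpa using ((hasDerivAt_id t).smul_const v).const_add q
  have hgcd : ContDiff ℝ 4 g :=
    hu.comp (contDiff_const.add (contDiff_id.smul contDiff_const))
  have hK : ∀ t, |iteratedDeriv 4 g t| ≤ M * ‖v‖ ^ 4 := by
    intro t
    rw [hgdef, line_iteratedDeriv u hu q v le_rfl]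
    calc |iteratedFDeriv ℝ 4 u (q + t • v) (fun _ => v)|
        ≤ ‖iteratedFDeriv ℝ 4 u (q + t • v)‖ * ∏ _i : Fin 4, ‖v‖ :=
          (iteratedFDeriv ℝ 4 u (q + t • v)).le_opNorm _
      _ ≤ M * ‖v‖ ^ 4 := by
          simp only [Finset.prod_const, Finset.card_univ, Fintype.card_fin]
          exact mul_le_mul_of_nonneg_right (hM _) (by positivity)
  -- g ∘ neg
  set h : ℝ → ℝ := fun s => g (-s) with hhdef
  have hhcd : ContDiff ℝ 4 h := hgcd.comp contDiff_neg
  have hKh : ∀ t, |iteratedDeriv 4 h t| ≤ M * ‖v‖ ^ 4 := by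
    intro t
    rw [hhdef]
    rw [iteratedDeriv_comp_neg 4 g t]
    norm_num
    simpa using hK (-t)
  have hb1 := taylor4 g hgcd _ hK
  have hb2 := taylor4 h hhcd _ hKh
  have hd : ∀ k : ℕ, iteratedDeriv k h 0 = (-1 : ℝ) ^ k * iteratedDeriv k g 0 := by
    intro k
    rw [hhdef, iteratedDeriv_comp_neg k g 0]
    simp
  rw [hd 1, hd 2, hd 3] at hb2
  norm_num at hb2
  have h10 : h 1 = g (-1) := rfl
  have h00 : h 0 = g 0 := by rw [hhdef]; norm_num
  rw [h10, h00] at hb2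
  have hg1 : g 1 = u (q + v) := by rw [hgdef]; norm_num
  have hgm1 : g (-1) = u (q - v) := by
    rw [hgdef]; norm_num [sub_eq_add_neg]
  have hg0 : g 0 = u q := by rw [hgdef]; norm_num
  have hg2 : iteratedDeriv 2 g 0 = iteratedFDeriv ℝ 2 u q (fun _ => v) := by
    rw [hgdef, line_iteratedDeriv u hu q v (by norm_num)]
    norm_num
  rw [iteratedDeriv_one] at hb1
  rw [hg1, hg0, hg2] at hb1
  rw [hgm1, hg0, hg2] at hb2
  have key := abs_add_le _ _ |>.trans (add_le_add hb1 hb2)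
  rw [show u (q + v) - (u q + deriv g 0 + iteratedFDeriv ℝ 2 u q (fun _ => v) / 2
        + iteratedDeriv 3 g 0 / 6)
      + (u (q - v) - (u q + -deriv g 0
        + iteratedFDeriv ℝ 2 u q (fun _ => v) / 2 + -iteratedDeriv 3 g 0 / 6))
      = u (q + v) + u (q - v) - 2 * u q - iteratedFDeriv ℝ 2 u q (fun _ => v) by ring] at key
  calc |u (q + v) + u (q - v) - 2 * u q - iteratedFDeriv ℝ 2 u q (fun _ => v)|
      ≤ M * ‖v‖ ^ 4 / 6 + M * ‖v‖ ^ 4 / 6 := key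
    _ = M * ‖v‖ ^ 4 / 3 := by ring

lemma expand2 (F : ContinuousMultilinearMap ℝ (fun _ : Fin 2 => ℝ × ℝ) ℝ) (a b : ℝ) :
    F (fun _ => ((a, b) : ℝ × ℝ)) =
      a ^ 2 * F ![(1,0),(1,0)] + a * b * F ![(1,0),(0,1)]
        + a * b * F ![(0,1),(1,0)] + b ^ 2 * F ![(0,1),(0,1)] := by
  have u0 : ∀ (z w t : ℝ × ℝ), Function.update ![z, w] (0 : Fin 2) t = ![t, w] := by
    intro z w t; funext i; fin_cases i <;> simp
  have u1 : ∀ (z w t : ℝ × ℝ), Function.update ![z, w] (1 : Fin 2) t = ![z, t] := by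
    intro z w t; funext i; fin_cases i <;> simp
  have addl : ∀ z₁ z₂ w : ℝ × ℝ, F ![z₁ + z₂, w] = F ![z₁, w] + F ![z₂, w] := by
    intro z₁ z₂ w
    have := F.map_update_add ![z₁, w] 0 z₁ z₂
    rwa [u0, u0, u0] at this
  have smull : ∀ (c : ℝ) (z w : ℝ × ℝ), F ![c • z, w] = c * F ![z, w] := by
    intro c z w
    have := F.map_update_smul ![z, w] 0 c z
    rwa [u0, u0, smul_eq_mul] at this
  have addr : ∀ z w₁ w₂ : ℝ × ℝ, F ![z, w₁ + w₂] = F ![z, w₁] + F ![z, w₂] := by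
    intro z w₁ w₂
    have := F.map_update_add ![z, w₁] 1 w₁ w₂
    rwa [u1, u1, u1] at this
  have smulr : ∀ (c : ℝ) (z w : ℝ × ℝ), F ![z, c • w] = c * F ![z, w] := by
    intro c z w
    have := F.map_update_smul ![z, w] 1 c w
    rwa [u1, u1, smul_eq_mul] at this
  have hvec : (fun _ : Fin 2 => ((a, b) : ℝ × ℝ)) = ![(a, b), (a, b)] := by
    funext i; fin_cases i <;> rfl
  have hab : ((a, b) : ℝ × ℝ) = a • ((1:ℝ), (0:ℝ)) + b • ((0:ℝ), (1:ℝ)) := by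
    simp [Prod.ext_iff]
  rw [hvec, hab, addl, smull, smull, addr, addr, smulr, smulr, smulr, smulr]
  ring

/-- Consistency of the dangling-node I-stencil: for `u` C⁴ with bounded fourth
derivative, the I-stencil approximates `−(∂²u/∂x² + ∂²u/∂y²)(x,y)` with error
`O(Δx² + Δy⁴/Δx²)` for `0 < Δy ≤ Δx`. -/
theorem stmt14 (u : ℝ × ℝ → ℝ) (x y M : ℝ)
    (hu : ContDiff ℝ 4 u)
    (hM : ∀ p : ℝ × ℝ, ‖iteratedFDeriv ℝ 4 u p‖ ≤ M) :
    ∃ C : ℝ, ∀ Δx Δy : ℝ, 0 < Δy → Δy ≤ Δx →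
      |(1 / Δx ^ 2) *
          (2 * u (x, y) -
            (u (x + Δx, y + Δy) + u (x + Δx, y - Δy) +
              u (x - Δx, y + Δy) + u (x - Δx, y - Δy)) / 2) +
        (1 / Δy ^ 2 - 1 / Δx ^ 2) *
          (2 * u (x, y) - u (x, y + Δy) - u (x, y - Δy)) -
        (-(iteratedDeriv 2 (fun t => u (t, y)) x +
            iteratedDeriv 2 (fun t => u (x, t)) y))| ≤
      C * (Δx ^ 2 + Δy ^ 4 / Δx ^ 2) := by
  have hM0 : 0 ≤ M := le_trans (norm_nonneg _) (hM (0, 0))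
  refine ⟨M, ?_⟩
  intro Δx Δy hΔy hle
  have hΔx : 0 < Δx := lt_of_lt_of_le hΔy hle
  set F := iteratedFDeriv ℝ 2 u (x, y) with hF
  -- norms of the three direction vectors
  have hn1 : ‖((Δx, Δy) : ℝ × ℝ)‖ = Δx := by
    rw [Prod.norm_def]
    simp [Real.norm_eq_abs, abs_of_pos hΔx, abs_of_pos hΔy, max_eq_left hle]
  have hn2 : ‖((Δx, -Δy) : ℝ × ℝ)‖ = Δx := by
    rw [Prod.norm_def]
    simp [Real.norm_eq_abs, abs_of_pos hΔx, abs_of_pos hΔy, max_eq_left hle]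
  have hn3 : ‖(((0:ℝ), Δy) : ℝ × ℝ)‖ = Δy := by
    rw [Prod.norm_def]
    simp [Real.norm_eq_abs, abs_of_pos hΔy, le_of_lt hΔy]
  -- the three second-difference estimates
  have h1 := secdiff u hu M hM (x, y) (Δx, Δy)
  have h2 := secdiff u hu M hM (x, y) (Δx, -Δy)
  have h3 := secdiff u hu M hM (x, y) ((0:ℝ), Δy)
  rw [hn1] at h1; rw [hn2] at h2; rw [hn3] at h3
  simp only [Prod.mk_add_mk, Prod.mk_sub_mk, sub_neg_eq_add, ← sub_eq_add_neg, add_zero, sub_zero, ← hF] at h1 h2 h3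
  -- identify the target second derivatives
  have e1vec : (fun _ : Fin 2 => ((1:ℝ), (0:ℝ))) = ![(1,0),(1,0)] := by
    funext i; fin_cases i <;> rfl
  have e2vec : (fun _ : Fin 2 => ((0:ℝ), (1:ℝ))) = ![(0,1),(0,1)] := by
    funext i; fin_cases i <;> rfl
  have hA : iteratedDeriv 2 (fun t => u (t, y)) x = F ![(1,0),(1,0)] := by
    have hfun : (fun t : ℝ => u (t, y)) =
        fun t : ℝ => u (((0:ℝ), y) + t • ((1:ℝ), (0:ℝ))) := by
      funext t; norm_num
    rw [hfun, line_iteratedDeriv u hu _ _ (by norm_num)]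
    have hpt : ((0:ℝ), y) + x • ((1:ℝ), (0:ℝ)) = ((x, y) : ℝ × ℝ) := by norm_num
    simp only [hpt, ← hF, e1vec]
  have hB : iteratedDeriv 2 (fun t => u (x, t)) y = F ![(0,1),(0,1)] := by
    have hfun : (fun t : ℝ => u (x, t)) =
        fun t : ℝ => u ((x, (0:ℝ)) + t • ((0:ℝ), (1:ℝ))) := by
      funext t; norm_num
    rw [hfun, line_iteratedDeriv u hu _ _ (by norm_num)]
    have hpt : (x, (0:ℝ)) + y • ((0:ℝ), (1:ℝ)) = ((x, y) : ℝ × ℝ) := by norm_num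
    simp only [hpt, ← hF, e2vec]
  -- expansions of the quadratic forms
  have g1 := expand2 F Δx Δy
  have g2 := expand2 F Δx (-Δy)
  have g3 := expand2 F 0 Δy
  -- error terms
  set E1 := u (x + Δx, y + Δy) + u (x - Δx, y - Δy) - 2 * u (x, y)
    - F (fun _ => ((Δx, Δy) : ℝ × ℝ)) with hE1
  set E2 := u (x + Δx, y - Δy) + u (x - Δx, y + Δy) - 2 * u (x, y)
    - F (fun _ => ((Δx, -Δy) : ℝ × ℝ)) with hE2
  set E3 := u (x, y + Δy) + u (x, y - Δy) - 2 * u (x, y)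
    - F (fun _ => (((0:ℝ), Δy) : ℝ × ℝ)) with hE3
  have hb1 : |E1| ≤ M * Δx ^ 4 / 3 := h1
  have hb2 : |E2| ≤ M * Δx ^ 4 / 3 := h2
  have hb3 : |E3| ≤ M * Δy ^ 4 / 3 := h3
  -- rewrite the stencil expression in terms of the error terms
  have hΔx2 : (Δx : ℝ) ^ 2 ≠ 0 := pow_ne_zero 2 (ne_of_gt hΔx)
  have hΔy2 : (Δy : ℝ) ^ 2 ≠ 0 := pow_ne_zero 2 (ne_of_gt hΔy)
  have hrw : (1 / Δx ^ 2) *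
          (2 * u (x, y) -
            (u (x + Δx, y + Δy) + u (x + Δx, y - Δy) +
              u (x - Δx, y + Δy) + u (x - Δx, y - Δy)) / 2) +
        (1 / Δy ^ 2 - 1 / Δx ^ 2) *
          (2 * u (x, y) - u (x, y + Δy) - u (x, y - Δy)) -
        (-(iteratedDeriv 2 (fun t => u (t, y)) x +
            iteratedDeriv 2 (fun t => u (x, t)) y))
      = -(E1 + E2) / (2 * Δx ^ 2) - (1 / Δy ^ 2 - 1 / Δx ^ 2) * E3 := by
    rw [hA, hB, hE1, hE2, hE3, g1, g2, g3]
    field_simp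
    ring
  rw [hrw]
  have hpos : (0:ℝ) ≤ 1 / Δy ^ 2 - 1 / Δx ^ 2 := by
    rw [sub_nonneg]
    apply one_div_le_one_div_of_le (by positivity)
    exact pow_le_pow_left₀ (le_of_lt hΔy) hle 2
  have habs : |(-(E1 + E2) / (2 * Δx ^ 2) - (1 / Δy ^ 2 - 1 / Δx ^ 2) * E3)|
      ≤ (|E1| + |E2|) / (2 * Δx ^ 2) + (1 / Δy ^ 2 - 1 / Δx ^ 2) * |E3| := by
    calc |(-(E1 + E2) / (2 * Δx ^ 2) - (1 / Δy ^ 2 - 1 / Δx ^ 2) * E3)|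
        ≤ |(-(E1 + E2) / (2 * Δx ^ 2))| + |(1 / Δy ^ 2 - 1 / Δx ^ 2) * E3| :=
          abs_sub _ _
      _ = |E1 + E2| / (2 * Δx ^ 2) + (1 / Δy ^ 2 - 1 / Δx ^ 2) * |E3| := by
          rw [abs_div, abs_neg, abs_mul (1 / Δy ^ 2 - 1 / Δx ^ 2) E3, abs_of_nonneg hpos,
            abs_of_pos (by positivity : (0:ℝ) < 2 * Δx ^ 2)]
      _ ≤ (|E1| + |E2|) / (2 * Δx ^ 2) + (1 / Δy ^ 2 - 1 / Δx ^ 2) * |E3| := by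
          gcongr
          exact abs_add_le _ _
  refine habs.trans ?_
  have step1 : (|E1| + |E2|) / (2 * Δx ^ 2) ≤ M * Δx ^ 2 / 3 := by
    calc (|E1| + |E2|) / (2 * Δx ^ 2)
        ≤ (M * Δx ^ 4 / 3 + M * Δx ^ 4 / 3) / (2 * Δx ^ 2) :=
          (div_le_div_iff_of_pos_right (by positivity)).mpr (add_le_add hb1 hb2)
      _ = M * Δx ^ 2 / 3 := by field_simp; ring
  have step2 : (1 / Δy ^ 2 - 1 / Δx ^ 2) * |E3| ≤ M * Δy ^ 2 / 3 := by
    calc (1 / Δy ^ 2 - 1 / Δx ^ 2) * |E3| ≤ (1 / Δy ^ 2) * (M * Δy ^ 4 / 3) := by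
          apply mul_le_mul (by linarith [one_div_pos.mpr (pow_pos hΔx 2)]) hb3
            (abs_nonneg _) (by positivity)
      _ = M * Δy ^ 2 / 3 := by field_simp
  have hyx : Δy ^ 2 ≤ Δx ^ 2 := pow_le_pow_left₀ (le_of_lt hΔy) hle 2
  have hfin : M * Δx ^ 2 / 3 + M * Δy ^ 2 / 3 ≤ M * (Δx ^ 2 + Δy ^ 4 / Δx ^ 2) := by
    have h1' : M * Δy ^ 2 ≤ M * Δx ^ 2 := mul_le_mul_of_nonneg_left hyx hM0
    have h2' : (0:ℝ) ≤ M * (Δy ^ 4 / Δx ^ 2) := by positivity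
    have h3' : (0:ℝ) ≤ M * Δx ^ 2 := by positivity
    rw [mul_add]
    linarith only [h1', h2', h3']
  linarith only [step1, step2, hfin]
end
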